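/- arXiv:2210.00197 — 4 statements merged into one kernel-verified Lean document; each statement's English description precedes it below -/
import Mathlib

section
/- Suppose 𝓕 is a nonempty collection of subsets of a set X such that the union of every subfamily of 𝓕 that is totally ordered by inclusion belongs to 𝓕. Suppose g is a function that associates to each D ∈ 𝓕 a set g(D) ∈ 𝓕 such that D ⊆ g(D) and g(D) \ D has at most one element. Then there exists D ∈ 𝓕 for which g(D) = D. -/
/-- If `𝓕` is a nonempty family of subsets of `X` closed under unions of subchains, and
`g : 𝓕 → 𝓕` satisfies `D ⊆ g D` with `g D \ D` having at most one element, then `g` has a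
fixed point in `𝓕`. -/
theorem exists_fixed_point_of_subchain_closed {X : Type*} (F : Set (Set X))
    (hne : F.Nonempty)
    (hchain : ∀ c ⊆ F, IsChain (· ⊆ ·) c → ⋃₀ c ∈ F)
    (g : Set X → Set X)
    (hgF : ∀ D ∈ F, g D ∈ F)
    (hsub : ∀ D ∈ F, D ⊆ g D)
    (hone : ∀ D ∈ F, (g D \ D).Subsingleton) :
    ∃ D ∈ F, g D = D := by
  obtain ⟨m, hm, hmax⟩ := zorn_subset F (fun c hc hc' =>
    ⟨⋃₀ c, hchain c hc hc', fun s hs => Set.subset_sUnion_of_mem hs⟩)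
  exact ⟨m, hm, Set.Subset.antisymm (hmax (hgF m hm) (hsub m hm)) (hsub m hm)⟩
end

section
/- Let R be a binary relation on a set X, let Y ⊆ X be a nonempty top R-cycle, and let y ∈ Y. Then y is maximal with respect to the asymmetric part of the transitive closure of R; that is, for every z ∈ X, if (z, y) ∈ R̄ then (y, z) ∈ R̄. -/
/-- `Y` is an `R`-cycle: any two elements are related both ways by the transitive closure of `R`. -/
def RCycle {X : Type*} (R : X → X → Prop) (Y : Set X) : Prop :=
  ∀ x ∈ Y, ∀ y ∈ Y, Relation.TransGen R x y ∧ Relation.TransGen R y x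

/-- `Y` is a top `R`-cycle: an `R`-cycle such that no element outside `Y` is `R`-related
to an element of `Y`. -/
def TopRCycle {X : Type*} (R : X → X → Prop) (Y : Set X) : Prop :=
  RCycle R Y ∧ ∀ y ∉ Y, ∀ x ∈ Y, ¬ R y x

/-- Every element of a nonempty top `R`-cycle is maximal with respect to the asymmetric
part of the transitive closure of `R`. -/
theorem topRCycle_mem_maximal {X : Type*} (R : X → X → Prop) (Y : Set X)
    (hne : Y.Nonempty) (htop : TopRCycle R Y) (y : X) (hy : y ∈ Y) :
    ∀ z : X, Relation.TransGen R z y → Relation.TransGen R y z := by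
  obtain ⟨hcyc, htop⟩ := htop
  intro z hz
  have hmemz : z ∈ Y := by
    induction hz using Relation.TransGen.head_induction_on with
    | single h => by_contra hn; exact htop _ hn y hy h
    | head h _ ih => by_contra hn; exact htop _ hn _ ih h
  exact (hcyc y hy z hmemz).1
end

section
/- Let R be a binary relation on a set X and let x* ∈ X be maximal with respect to the asymmetric part of the transitive closure R̄ of R (i.e., for every z ∈ X, if (z, x*) ∈ R̄ then (x*, z) ∈ R̄). Suppose there exists ỹ ∈ X with (ỹ, x*) ∈ R. Then the set A = { y ∈ X | (x*, y) ∈ R̄ and (y, x*) ∈ R̄ } is a nonempty top R-cycle. -/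
/-- If `x*` is maximal with respect to the asymmetric part of the transitive closure of `R`
and some `ỹ` satisfies `(ỹ, x*) ∈ R`, then the set of points related both ways to `x*`
by the transitive closure is a nonempty top `R`-cycle. -/
theorem cycleClass_topRCycle {X : Type*} (R : X → X → Prop) (xstar : X)
    (hmax : ∀ z : X, Relation.TransGen R z xstar → Relation.TransGen R xstar z)
    (hdom : ∃ ytilde : X, R ytilde xstar) :
    ({y : X | Relation.TransGen R xstar y ∧ Relation.TransGen R y xstar}).Nonempty ∧
      TopRCycle R {y : X | Relation.TransGen R xstar y ∧ Relation.TransGen R y xstar} := by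
  obtain ⟨yt, hyt⟩ := hdom
  have hyt' : Relation.TransGen R yt xstar := Relation.TransGen.single hyt
  refine ⟨⟨yt, hmax yt hyt', hyt'⟩, ?_, ?_⟩
  · rintro x ⟨hx1, hx2⟩ y ⟨hy1, hy2⟩
    exact ⟨hx2.trans hy1, hy2.trans hx1⟩
  · rintro y hy x ⟨hx1, hx2⟩ hR
    exact hy ⟨hmax y ((Relation.TransGen.single hR).trans hx2),
      (Relation.TransGen.single hR).trans hx2⟩
end

section
/- Let R be a binary relation on a set X and let D be a minimal R-undominated subset of X containing at least two elements. Then for all x, y ∈ D, (x, y) ∈ R̄; in particular, D is a top R-cycle. -/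
/-- `Y` is `R`-undominated: no element outside `Y` is `R`-related to an element of `Y`. -/
def RUndominated {X : Type*} (R : X → X → Prop) (Y : Set X) : Prop :=
  ∀ x ∈ Y, ∀ y ∉ Y, ¬ R y x

/-- `Y` is a minimal `R`-undominated set: nonempty, `R`-undominated, and no nonempty
proper subset of it is `R`-undominated. -/
def MinRUndominated {X : Type*} (R : X → X → Prop) (Y : Set X) : Prop :=
  Y.Nonempty ∧ RUndominated R Y ∧ ∀ Z : Set X, Z.Nonempty → Z ⊂ Y → ¬ RUndominated R Z

/-- A minimal `R`-undominated set with at least two elements has any two of its elements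
related by the transitive closure of `R`; in particular it is a top `R`-cycle. -/
theorem minRUndominated_topRCycle {X : Type*} (R : X → X → Prop) (D : Set X)
    (hmin : MinRUndominated R D) (htwo : ∃ a ∈ D, ∃ b ∈ D, a ≠ b) :
    (∀ x ∈ D, ∀ y ∈ D, Relation.TransGen R x y) ∧ TopRCycle R D := by
  obtain ⟨hne, hund, hminimal⟩ := hmin
  -- Key claim: any element of D distinct from y reaches y.
  have key : ∀ y ∈ D, ∀ x ∈ D, x ≠ y → Relation.TransGen R x y := by
    intro y hy x hx hxy
    set Z : Set X := {z ∈ D | z = y ∨ Relation.TransGen R z y} with hZ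
    have hZsub : Z ⊆ D := fun z hz => hz.1
    have hZne : Z.Nonempty := ⟨y, hy, Or.inl rfl⟩
    have hZund : RUndominated R Z := by
      intro z hz w hw hRwz
      have hwD : w ∈ D := by
        by_contra hwD
        exact hund z (hZsub hz) w hwD hRwz
      apply hw
      refine ⟨hwD, Or.inr ?_⟩
      rcases hz.2 with rfl | h
      · exact Relation.TransGen.single hRwz
      · exact Relation.TransGen.head hRwz h
    have hZeq : Z = D := by
      by_contra hne'
      exact hminimal Z hZne ⟨hZsub, fun h => hne' (le_antisymm hZsub h)⟩ hZund
    have hxZ : x ∈ Z := hZeq ▸ hx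
    rcases hxZ.2 with rfl | h
    · exact absurd rfl hxy
    · exact h
  have hall : ∀ x ∈ D, ∀ y ∈ D, Relation.TransGen R x y := by
    intro x hx y hy
    by_cases hxy : x = y
    · subst hxy
      obtain ⟨a, ha, b, hb, hab⟩ := htwo
      by_cases hxa : x = a
      · subst hxa
        exact (key b hb x hx hab).trans (key x hx b hb (Ne.symm hab))
      · exact (key a ha x hx hxa).trans (key x hx a ha fun h => hxa h.symm)
    · exact key y hy x hx hxy
  refine ⟨hall, ⟨fun x hx y hy => ⟨hall x hx y hy, hall y hy x hx⟩, ?_⟩⟩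
  intro y hy x hx
  exact hund x hx y hy
end
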